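/- Let q : ℕ → ℚ be the sequence q n = (2n+1) / 2^(Nat.size (2n+1)) where Nat.size m is the number of binary digits of m. Then the real-valued sequence (q n : ℝ) does not converge: along the odd numbers of the form 2^k − 1 (i.e., n = 2^(k−1) − 1) the terms (2^k − 1)/2^k tend to 1, while along the odd numbers of the form 2^k + 1 (i.e., n = 2^(k−1)) the terms (2^k + 1)/2^(k+1) tend to 1/2, so there is no real number L with q n → L. -/

import Mathlib

open Filter Topology

/-- The rational whose binary fractional digits are the binary digits of the
n-th odd number. -/
def q (n : ℕ) : ℚ := (2 * n + 1 : ℚ) / 2 ^ (Nat.size (2 * n + 1))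

lemma size_eq_of (m k : ℕ) (h1 : 2 ^ k ≤ m) (h2 : m < 2 ^ (k+1)) :
    Nat.size m = k + 1 := by
  have hle : Nat.size m ≤ k + 1 := Nat.size_le.2 h2
  have hlt : k < Nat.size m := Nat.lt_size.2 h1
  omega

lemma qA (k : ℕ) : (q (2 ^ k - 1) : ℝ) = 1 - (1/2 : ℝ) ^ (k + 1) := by
  have h1 : (1 : ℕ) ≤ 2 ^ k := Nat.one_le_two_pow
  have harg : 2 * (2 ^ k - 1) + 1 = 2 ^ (k+1) - 1 := by
    have : 2 ^ (k+1) = 2 * 2 ^ k := by ring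
    omega
  have hsize : Nat.size (2 * (2 ^ k - 1) + 1) = k + 1 := by
    rw [harg]
    apply size_eq_of
    · have : 2 ^ k < 2 ^ (k+1) := by
        exact Nat.pow_lt_pow_right (by norm_num) (by omega)
      omega
    · omega
  have hpow : (0:ℝ) < (2:ℝ) ^ (k+1) := by positivity
  rw [q, hsize]
  push_cast [h1]
  field_simp
  ring_nf; rw [← mul_pow]; norm_num

lemma qB (k : ℕ) : (q (2 ^ k) : ℝ) = 1/2 + (1/2 : ℝ) ^ (k + 2) := by
  have hsize : Nat.size (2 * 2 ^ k + 1) = k + 2 := by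
    have h2 : 2 * 2 ^ k = 2 ^ (k+1) := by ring
    rw [h2]
    apply size_eq_of
    · have : 2 ^ (k+1) < 2 ^ (k+2) := Nat.pow_lt_pow_right (by norm_num) (by omega)
      omega
    · have : 2 ^ (k+1) + 2 ^ (k+1) = 2 ^ (k+2) := by ring
      have h1 : (1:ℕ) < 2 ^ (k+1) := Nat.one_lt_two_pow (by omega)
      omega
  rw [q, hsize]
  push_cast
  have hpow : (0:ℝ) < (2:ℝ) ^ (k+2) := by positivity
  field_simp
  ring_nf; rw [← mul_pow]; norm_num

theorem q_not_convergent :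
    Tendsto (fun k : ℕ => (q (2 ^ k - 1) : ℝ)) atTop (𝓝 1) ∧
    Tendsto (fun k : ℕ => (q (2 ^ k) : ℝ)) atTop (𝓝 (1 / 2)) ∧
    ¬ ∃ L : ℝ, Tendsto (fun n : ℕ => (q n : ℝ)) atTop (𝓝 L) := by
  have hhalf : Tendsto (fun k : ℕ => ((1:ℝ)/2) ^ k) atTop (𝓝 0) :=
    tendsto_pow_atTop_nhds_zero_of_lt_one (by norm_num) (by norm_num)
  have hA : Tendsto (fun k : ℕ => (q (2 ^ k - 1) : ℝ)) atTop (𝓝 1) := by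
    simp only [qA]
    have : Tendsto (fun k : ℕ => (1:ℝ) - (1/2)^(k+1)) atTop (𝓝 (1 - 0)) :=
      tendsto_const_nhds.sub (hhalf.comp (tendsto_add_atTop_nat 1))
    simpa using this
  have hB : Tendsto (fun k : ℕ => (q (2 ^ k) : ℝ)) atTop (𝓝 (1/2)) := by
    simp only [qB]
    have : Tendsto (fun k : ℕ => (1:ℝ)/2 + (1/2)^(k+2)) atTop (𝓝 (1/2 + 0)) :=
      tendsto_const_nhds.add (hhalf.comp (tendsto_add_atTop_nat 2))
    simpa using this
  refine ⟨hA, hB, ?_⟩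
  rintro ⟨L, hL⟩
  have hmonoA : Tendsto (fun k : ℕ => 2 ^ k - 1) atTop atTop := by
    apply tendsto_atTop_mono (fun k => ?_) tendsto_id
    have := Nat.lt_two_pow_self (n := k)
    simp only [id]
    omega
  have hmonoB : Tendsto (fun k : ℕ => 2 ^ k) atTop atTop :=
    tendsto_pow_atTop_atTop_of_one_lt (by norm_num)
  have h1 : Tendsto (fun k : ℕ => (q (2 ^ k - 1) : ℝ)) atTop (𝓝 L) := hL.comp hmonoA
  have h2 : Tendsto (fun k : ℕ => (q (2 ^ k) : ℝ)) atTop (𝓝 L) := hL.comp hmonoB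
  have e1 : L = 1 := tendsto_nhds_unique h1 hA
  have e2 : L = 1/2 := tendsto_nhds_unique h2 hB
  norm_num [e1] at e2
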